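/- Let A₁,…,Aₙ be Hermitian positive definite d×d complex matrices and let B₁,…,Bₙ be d×d complex matrices with Σᵢ Bᵢ* Bᵢ = I, where Bᵢ* denotes the conjugate transpose. Then the matrix inverse function is hyperconvex: (Σᵢ Bᵢ* Aᵢ Bᵢ)⁻¹ ≤ Σᵢ Bᵢ* Aᵢ⁻¹ Bᵢ in the Loewner order, i.e. Σᵢ Bᵢ* Aᵢ⁻¹ Bᵢ − (Σᵢ Bᵢ* Aᵢ Bᵢ)⁻¹ is positive semidefinite (note Σᵢ Bᵢ* Aᵢ Bᵢ is Hermitian positive definite, hence invertible). -/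

import Mathlib

open Matrix
open scoped ComplexOrder

private lemma sum_mulVec' {n d : ℕ} (M : Fin n → Matrix (Fin d) (Fin d) ℂ) (x : Fin d → ℂ) :
    (∑ i, M i) *ᵥ x = ∑ i, M i *ᵥ x := by
  ext j
  simp [Matrix.mulVec, Matrix.sum_apply, dotProduct, Finset.sum_mul]
  rw [Finset.sum_comm]

private lemma psd_sum {n : ℕ} {m : Type*} [Fintype m] (M : Fin n → Matrix m m ℂ)
    (h : ∀ i, (M i).PosSemidef) : (∑ i, M i).PosSemidef := by
  classical
  refine Finset.sum_induction M _ (fun a b ha hb => ha.add hb) .zero (fun i _ => h i)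

private lemma sum_fromBlocks {n d : ℕ} (A B C D : Fin n → Matrix (Fin d) (Fin d) ℂ) :
    ∑ i, fromBlocks (A i) (B i) (C i) (D i) =
      fromBlocks (∑ i, A i) (∑ i, B i) (∑ i, C i) (∑ i, D i) := by
  ext (j | j) (k | k) <;> simp [Matrix.sum_apply]

/-- Hyperconvexity of the matrix inverse function: if the `Aᵢ` are Hermitian positive definite
and the matrix weights satisfy `Σᵢ Bᵢ* Bᵢ = I`, then
`(Σᵢ Bᵢ* Aᵢ Bᵢ)⁻¹ ≤ Σᵢ Bᵢ* Aᵢ⁻¹ Bᵢ` in the Loewner order. -/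
theorem matrix_inv_hyperconvex (n d : ℕ)
    (A : Fin n → Matrix (Fin d) (Fin d) ℂ) (hA : ∀ i, (A i).PosDef)
    (B : Fin n → Matrix (Fin d) (Fin d) ℂ) (hB : ∑ i, (B i)ᴴ * B i = 1) :
    (∑ i, (B i)ᴴ * (A i)⁻¹ * B i - (∑ i, (B i)ᴴ * A i * B i)⁻¹).PosSemidef := by
  classical
  set S : Matrix (Fin d) (Fin d) ℂ := ∑ i, (B i)ᴴ * (A i)⁻¹ * B i with hS
  set T : Matrix (Fin d) (Fin d) ℂ := ∑ i, (B i)ᴴ * A i * B i with hTdef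
  have hTpsd : ∀ i, ((B i)ᴴ * A i * B i).PosSemidef := fun i =>
    (hA i).posSemidef.conjTranspose_mul_mul_same _
  have hT : T.PosDef := by
    refine PosDef.of_dotProduct_mulVec_pos (psd_sum _ hTpsd).1 fun x hx => ?_
    have hex : ∃ i, B i *ᵥ x ≠ 0 := by
      by_contra h
      push_neg at h
      apply hx
      have h0 : (∑ i, (B i)ᴴ * B i) *ᵥ x = 0 := by
        rw [sum_mulVec']
        refine Finset.sum_eq_zero fun i _ => ?_
        rw [← Matrix.mulVec_mulVec, h i, Matrix.mulVec_zero]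
      rwa [hB, Matrix.one_mulVec] at h0
    obtain ⟨i0, hi0⟩ := hex
    have hrw : star x ⬝ᵥ T *ᵥ x = ∑ i, star x ⬝ᵥ ((B i)ᴴ * A i * B i) *ᵥ x := by
      rw [hTdef, sum_mulVec']
      simp [dotProduct, Finset.mul_sum, Finset.sum_apply]
      rw [Finset.sum_comm]
    rw [hrw]
    refine Finset.sum_pos' (fun i _ => (hTpsd i).dotProduct_mulVec_nonneg x) ⟨i0, Finset.mem_univ _, ?_⟩
    simpa only [star_mulVec, dotProduct_mulVec, vecMul_vecMul] using (hA i0).dotProduct_mulVec_pos hi0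
  haveI : Invertible T := hT.isUnit.invertible
  have hblock : (fromBlocks S (1 : Matrix (Fin d) (Fin d) ℂ) 1 T).PosSemidef := by
    have hterm : ∀ i, (fromBlocks (B i) 0 0 (B i))ᴴ * fromBlocks (A i)⁻¹ 1 1 (A i) *
        fromBlocks (B i) 0 0 (B i) =
        fromBlocks ((B i)ᴴ * (A i)⁻¹ * B i) ((B i)ᴴ * B i) ((B i)ᴴ * B i)
          ((B i)ᴴ * A i * B i) := by
      intro i
      simp [fromBlocks_conjTranspose, fromBlocks_multiply]
    have key : fromBlocks S (1 : Matrix (Fin d) (Fin d) ℂ) 1 T =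
        ∑ i, (fromBlocks (B i) 0 0 (B i))ᴴ * fromBlocks (A i)⁻¹ 1 1 (A i) *
          fromBlocks (B i) 0 0 (B i) := by
      rw [Finset.sum_congr rfl fun i _ => hterm i, sum_fromBlocks, hB]
    rw [key]
    refine psd_sum _ fun i => PosSemidef.conjTranspose_mul_mul_same ?_ _
    haveI : Invertible (A i) := (hA i).isUnit.invertible
    have h0 : ((A i)⁻¹ - 1 * (A i)⁻¹ * (1 : Matrix (Fin d) (Fin d) ℂ)ᴴ).PosSemidef := by
      simpa using (Matrix.PosSemidef.zero (n := Fin d) (R := ℂ))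
    have := (PosDef.fromBlocks₂₂ (A i)⁻¹ 1 (hA i)).mpr h0
    simpa using this
  have hfinal := (PosDef.fromBlocks₂₂ S 1 hT).mp
    (by rw [conjTranspose_one]; exact hblock)
  simpa using hfinal
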